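/- A zero-dimensional Bézout ring is a strict Bézout ring. -/
import Mathlib


/-- A zero-dimensional Bézout ring is a strict Bézout ring. -/
theorem zero_dim_bezout_is_strict (R : Type*) [CommRing R]
    (hdim : ∀ a : R, ∃ (k : ℕ) (x : R), a ^ k * (a * x - 1) = 0)
    (hbez : ∀ I : Ideal R, I.FG → I.IsPrincipal) :
    ∀ b₁ b₂ : R, ∃ d b₁' b₂' c₁ c₂ : R,
      b₁ = d * b₁' ∧ b₂ = d * b₂' ∧ c₁ * b₁' + c₂ * b₂' = 1 := by
  intro b₁ b₂
  obtain ⟨d, hd⟩ := hbez (Ideal.span {b₁, b₂}) (Submodule.fg_span ((Set.finite_singleton b₂).insert b₁))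
  have hb1m : b₁ ∈ Ideal.span ({b₁, b₂} : Set R) := Ideal.subset_span (by simp)
  have hb2m : b₂ ∈ Ideal.span ({b₁, b₂} : Set R) := Ideal.subset_span (by simp)
  rw [hd] at hb1m hb2m
  obtain ⟨a₁, hb1⟩ := Ideal.mem_span_singleton'.mp hb1m
  obtain ⟨a₂, hb2⟩ := Ideal.mem_span_singleton'.mp hb2m
  have hdm : d ∈ Submodule.span R ({d} : Set R) := Ideal.subset_span (by simp)
  rw [← hd] at hdm
  obtain ⟨u, v, huv⟩ := Ideal.mem_span_pair.mp hdm
  set e : R := u * a₁ + v * a₂ with he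
  have hde : d * e = d := by
    have h1 : u * (a₁ * d) + v * (a₂ * d) = d := by rw [hb1, hb2]; exact huv
    rw [he]; linear_combination h1
  obtain ⟨k, x, hk⟩ := hdim e
  have hE : ∀ n : ℕ, e ^ (k + 1) * (e ^ n * x ^ n) = e ^ (k + 1) := by
    intro n
    induction n with
    | zero => simp
    | succ n ih =>
      have h1 : e ^ (k + 1) * (e * x) = e ^ (k + 1) := by
        have h0 : e * (e ^ k * (e * x - 1)) = 0 := by rw [hk]; ring
        linear_combination h0
      calc e ^ (k + 1) * (e ^ (n + 1) * x ^ (n + 1))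
          = (e ^ (k + 1) * (e * x)) * (e ^ n * x ^ n) := by ring
        _ = e ^ (k + 1) * (e ^ n * x ^ n) := by rw [h1]
        _ = e ^ (k + 1) := ih
  have hdn : ∀ n : ℕ, d * e ^ n = d := by
    intro n
    induction n with
    | zero => simp
    | succ n ih =>
      calc d * e ^ (n + 1) = (d * e) * e ^ n := by ring
        _ = d * e ^ n := by rw [hde]
        _ = d := ih
  have hE1 := hE (k + 1)
  have hdn1 := hdn (k + 1)
  have hf2 : (e ^ (k+1) * x ^ (k+1)) * (e ^ (k+1) * x ^ (k+1)) = e ^ (k+1) * x ^ (k+1) := by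
    linear_combination x ^ (k+1) * hE1
  have hdf : d * (e ^ (k+1) * x ^ (k+1)) = d := by
    linear_combination d * hE1 + (1 - e ^ (k+1) * x ^ (k+1)) * hdn1
  have hehf : e * (e ^ k * x ^ (k+1)) * (e ^ (k+1) * x ^ (k+1)) = e ^ (k+1) * x ^ (k+1) := by
    linear_combination x ^ (k+1) * hE1
  refine ⟨d, a₁ * (e ^ (k+1) * x ^ (k+1)) + (1 - e ^ (k+1) * x ^ (k+1)),
      a₂ * (e ^ (k+1) * x ^ (k+1)),
      u * (e ^ k * x ^ (k+1)) * (e ^ (k+1) * x ^ (k+1)) + (1 - e ^ (k+1) * x ^ (k+1)),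
      v * (e ^ k * x ^ (k+1)) * (e ^ (k+1) * x ^ (k+1)), ?_, ?_, ?_⟩
  · linear_combination -hb1 + (1 - a₁) * hdf
  · linear_combination -hb2 - a₂ * hdf
  · have he' : e = u * a₁ + v * a₂ := he
    rw [he'] at hehf
    linear_combination hehf +
      ((u * a₁ + v * a₂) * (e ^ k * x ^ (k+1)) - u * (e ^ k * x ^ (k+1)) - a₁ + 1) * hf2
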